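/- Let G = G(Γ, 𝔭) be a graph product of cyclic groups, g ∈ G, and let a₁, a₂, b₁, b₂ ∈ Γ − sp(g) be four distinct vertices such that a₁ is not adjacent to b₁ and a₂ is not adjacent to b₂. Then for every n ≥ 2 the element g·a₁⁻¹a₂b₁⁻¹b₂ has no n-th root in G. -/

import Mathlib

set_option linter.unusedSectionVars false
set_option maxHeartbeats 1000000
open Monoid List

section FP
variable {ι : Type} [DecidableEq ι] (G : ι → Type) [∀ i, Group (G i)] [∀ i, DecidableEq (G i)]

def wprod (L : List (Σ i, G i)) : Monoid.CoprodI G :=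
  (L.map fun l => Monoid.CoprodI.of l.2).prod

lemma wprod_word (w : CoprodI.Word G) : wprod G w.toList = w.prod := rfl

lemma equiv_prod (w : CoprodI.Word G) : CoprodI.Word.equiv w.prod = w := by
  have h : w.prod = (CoprodI.Word.equiv (M := G)).symm w := rfl
  rw [h, Equiv.apply_symm_apply]

lemma prod_equiv (x : CoprodI G) : (CoprodI.Word.equiv x).prod = x := by
  have h : ∀ w, (CoprodI.Word.equiv (M := G)).symm w = w.prod := fun _ => rfl
  rw [← h, Equiv.symm_apply_apply]

lemma equiv_wprod (L : List (Σ i, G i)) (h1 : ∀ l ∈ L, l.2 ≠ 1)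
    (h2 : L.IsChain fun l l' => l.1 ≠ l'.1) :
    CoprodI.Word.equiv (wprod G L) = ⟨L, h1, h2⟩ :=
  equiv_prod G ⟨L, h1, h2⟩

lemma wprod_nil : wprod G ([] : List (Σ i, G i)) = 1 := rfl

lemma wprod_cons (a : Σ i, G i) (L : List (Σ i, G i)) :
    wprod G (a :: L) = CoprodI.of a.2 * wprod G L := by simp [wprod]

lemma wprod_append (L₁ L₂ : List (Σ i, G i)) :
    wprod G (L₁ ++ L₂) = wprod G L₁ * wprod G L₂ := by simp [wprod]

lemma wprod_flatten_replicate (k : ℕ) (L : List (Σ i, G i)) :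
    wprod G ((List.replicate k L).flatten) = (wprod G L) ^ k := by
  induction k with
  | zero => simp [wprod]
  | succ k ih => rw [List.replicate_succ, List.flatten_cons, wprod_append, ih, pow_succ']

lemma head?_flatten_replicate {α : Type*} (n : ℕ) (hn : n ≠ 0) (L : List α) :
    ((List.replicate n L).flatten).head? = L.head? := by
  induction n with
  | zero => omega
  | succ k ih =>
    rw [List.replicate_succ, List.flatten_cons, List.head?_append]
    rcases Nat.eq_zero_or_pos k with rfl | hk
    · simp
    · rw [ih (by omega)]; cases L.head? <;> simp

lemma getLast?_flatten_replicate {α : Type*} (n : ℕ) (hn : n ≠ 0) (L : List α) :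
    ((List.replicate n L).flatten).getLast? = L.getLast? := by
  induction n with
  | zero => omega
  | succ k ih =>
    rw [List.replicate_succ', List.flatten_concat, List.getLast?_append]
    rcases Nat.eq_zero_or_pos k with rfl | hk
    · simp
    · rw [ih (by omega)]; cases L.getLast? <;> simp

lemma length_flatten_replicate {α : Type*} (n : ℕ) (L : List α) :
    ((List.replicate n L).flatten).length = n * L.length := by
  simp [List.length_flatten, List.map_replicate, List.sum_replicate, smul_eq_mul]

lemma chain'_flatten_replicate {α : Type*} {R : α → α → Prop} {L : List α} (h : L.IsChain R)
    (hb : ∀ x ∈ L.getLast?, ∀ y ∈ L.head?, R x y) (n : ℕ) :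
    ((List.replicate n L).flatten).IsChain R := by
  induction n with
  | zero => simp
  | succ k ih =>
    rw [List.replicate_succ, List.flatten_cons]
    refine h.append ih ?_
    intro x hx y hy
    rcases Nat.eq_zero_or_pos k with rfl | hk
    · simp at hy
    · rw [head?_flatten_replicate k (by omega)] at hy
      exact hb x hx y hy

lemma pow_abc {H : Type*} [Monoid H] (a b c : H) (k : ℕ) :
    (a * b * c) ^ (k + 1) = a * b * (c * a * b) ^ k * c := by
  induction k with
  | zero => simp
  | succ k ih =>
    rw [pow_succ, ih, pow_succ]
    simp [mul_assoc]

lemma conj_pow'' {H : Type*} [Group H] (c m : H) (k : ℕ) :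
    (c⁻¹ * m * c) ^ k = c⁻¹ * m ^ k * c := by
  induction k with
  | zero => simp
  | succ k ih => rw [pow_succ, ih, pow_succ]; simp [mul_assoc]

theorem pow_word_aux (n : ℕ) (hn : 2 ≤ n) (N : ℕ) : ∀ (L : List (Σ i, G i)),
    L.length ≤ N → (∀ l ∈ L, l.2 ≠ 1) → (L.IsChain fun l l' => l.1 ≠ l'.1) →
    (CoprodI.Word.equiv ((wprod G L) ^ n)).toList = [] ∨
      ((CoprodI.Word.equiv ((wprod G L) ^ n)).toList.head?.map Sigma.fst
          = L.head?.map Sigma.fst ∧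
       (CoprodI.Word.equiv ((wprod G L) ^ n)).toList.getLast?.map Sigma.fst
          = L.getLast?.map Sigma.fst ∧
       (L.head?.map Sigma.fst ≠ L.getLast?.map Sigma.fst →
         (CoprodI.Word.equiv ((wprod G L) ^ n)).toList.length = n * L.length)) := by
  induction N with
  | zero =>
    intro L hlen h1 h2
    have : L = [] := List.eq_nil_of_length_eq_zero (by omega)
    subst this
    left
    rw [wprod_nil, one_pow, show (1 : CoprodI G) = wprod G [] from rfl,
      equiv_wprod G [] (by simp) (by simp)]
  | succ N ih =>
  intro L hlen h1 h2
  rcases L with _ | ⟨a, l'⟩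
  · left
    rw [wprod_nil, one_pow, show (1 : CoprodI G) = wprod G [] from rfl,
      equiv_wprod G [] (by simp) (by simp)]
  rcases List.eq_nil_or_concat l' with rfl | ⟨M, b, rfl⟩
  · -- singleton
    obtain ⟨i, c⟩ := a
    have hc : c ≠ 1 := h1 ⟨i, c⟩ (by simp)
    have hone : wprod G [⟨i, c⟩] = CoprodI.of c := by simp [wprod]
    rw [hone, ← map_pow]
    by_cases hcn : c ^ n = 1
    · left
      rw [hcn, map_one, show (1 : CoprodI G) = wprod G [] from rfl,
        equiv_wprod G [] (by simp) (by simp)]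
    · right
      rw [show (CoprodI.of (c ^ n) : CoprodI G) = wprod G [⟨i, c ^ n⟩] by simp [wprod],
        equiv_wprod G [⟨i, c ^ n⟩] (by simpa using hcn) (by simp)]
      refine ⟨rfl, rfl, fun h => absurd rfl h⟩
  · -- length ≥ 2
    obtain ⟨i, s⟩ := a
    obtain ⟨j, t⟩ := b
    simp only [List.concat_eq_append] at h1 h2 ⊢
    have hs : s ≠ 1 := h1 ⟨i, s⟩ (by simp)
    have ht : t ≠ 1 := h1 ⟨j, t⟩ (by simp)
    have h2' : ((⟨i, s⟩ :: M) ++ [⟨j, t⟩] : List (Σ i, G i)).IsChain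
        (fun l l' => l.1 ≠ l'.1) := by simpa using h2
    obtain ⟨cAM, -, cbd⟩ := List.isChain_append.mp h2'
    obtain ⟨chead, cM⟩ := List.isChain_cons.mp cAM
    by_cases hij : i = j
    · subst hij
      have hM : M ≠ [] := by
        rintro rfl
        exact cbd ⟨i, s⟩ (by simp) ⟨i, t⟩ (by simp) rfl
      have hgl : (⟨i, s⟩ :: M : List (Σ i, G i)).getLast? = some (M.getLast hM) := by
        rw [show ((⟨i, s⟩ :: M) : List (Σ i, G i)) = [⟨i, s⟩] ++ M from rfl,
          List.getLast?_append, List.getLast?_eq_getLast hM]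
        rfl
      have hmb : (M.getLast hM).1 ≠ i :=
        cbd (M.getLast hM) (by rw [hgl]; rfl) ⟨i, t⟩ (by rfl)
      have hMh : M.head? = some (M.head hM) := List.head?_eq_head hM
      have hih : i ≠ (M.head hM).1 := chead (M.head hM) (by rw [hMh]; rfl)
      have hx : wprod G (⟨i, s⟩ :: (M ++ [⟨i, t⟩])) =
          CoprodI.of s * wprod G M * CoprodI.of t := by
        simp [wprod, mul_assoc]
      by_cases hts : t * s = 1
      · -- cancellation: x = t⁻¹ m t
        have hsinv : s = t⁻¹ := eq_inv_of_mul_eq_one_right hts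
        have hxc : wprod G (⟨i, s⟩ :: (M ++ [⟨i, t⟩])) =
            (CoprodI.of t)⁻¹ * wprod G M * CoprodI.of t := by
          rw [hx, hsinv, map_inv]
        have hxn : (wprod G (⟨i, s⟩ :: (M ++ [⟨i, t⟩]))) ^ n =
            (CoprodI.of t)⁻¹ * (wprod G M) ^ n * CoprodI.of t := by
          rw [hxc, conj_pow'']
        have hM1 : ∀ l ∈ M, l.2 ≠ 1 := fun l hl => h1 l (by simp [hl])
        have hMlen : M.length ≤ N := by
          have := hlen
          simp [List.length_concat] at this
          omega
        have IH := ih M hMlen hM1 cM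
        rcases IH with hemp | ⟨hh1, hl1, -⟩
        · -- m^n = 1
          have hWempty : CoprodI.Word.equiv ((wprod G M) ^ n) = CoprodI.Word.empty :=
            CoprodI.Word.ext hemp
          have hmn : (wprod G M) ^ n = 1 := by
            have := prod_equiv G ((wprod G M) ^ n)
            rw [hWempty, CoprodI.Word.prod_empty] at this
            exact this.symm
          left
          rw [hxn, hmn, mul_one, inv_mul_cancel,
            show (1 : CoprodI G) = wprod G [] from rfl,
            equiv_wprod G [] (by simp) (by simp)]
        · set W' := CoprodI.Word.equiv ((wprod G M) ^ n) with hW'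
          rw [hMh] at hh1
          obtain ⟨w0, hw0, hw0i⟩ := Option.map_eq_some_iff.mp hh1
          rw [List.getLast?_eq_getLast hM] at hl1
          obtain ⟨wl, hwl, hwli⟩ := Option.map_eq_some_iff.mp hl1
          have hw0ne : i ≠ w0.1 := by rw [hw0i]; exact hih
          have hwlne : wl.1 ≠ i := by rw [hwli]; exact hmb
          have hW'len : W'.toList ≠ [] := by
            intro h; rw [h] at hw0; simp at hw0
          -- new word
          have hne : ∀ l ∈ (⟨i, t⁻¹⟩ :: (W'.toList ++ [⟨i, t⟩]) : List (Σ i, G i)), l.2 ≠ 1 := by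
            intro l hl
            rcases List.mem_cons.mp hl with rfl | hl
            · exact inv_ne_one.mpr ht
            rcases List.mem_append.mp hl with hl | hl
            · exact W'.ne_one l hl
            · rw [List.mem_singleton.mp hl]; exact ht
          have hch : (⟨i, t⁻¹⟩ :: (W'.toList ++ [⟨i, t⟩]) : List (Σ i, G i)).IsChain
              (fun l l' => l.1 ≠ l'.1) := by
            refine List.isChain_cons.mpr ⟨?_, List.isChain_append.mpr
              ⟨W'.chain_ne, List.isChain_singleton _, ?_⟩⟩
            · intro y hy
              rw [List.head?_append, hw0] at hy
              simp only [Option.some_or] at hy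
              rw [Option.mem_some_iff] at hy
              rw [← hy]
              exact hw0ne
            · intro x hx y hy
              rw [hwl, Option.mem_some_iff] at hx
              simp only [List.head?_cons, Option.mem_some_iff] at hy
              rw [← hx, ← hy]
              exact hwlne
          have hprod : wprod G (⟨i, t⁻¹⟩ :: (W'.toList ++ [⟨i, t⟩])) =
              (wprod G (⟨i, s⟩ :: (M ++ [⟨i, t⟩]))) ^ n := by
            rw [hxn, wprod_cons, wprod_append,
              show wprod G W'.toList = W'.prod from rfl, hW', prod_equiv]
            simp [wprod, map_inv, mul_assoc]
          right
          rw [← hprod, equiv_wprod G _ hne hch]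
          refine ⟨rfl, ?_, fun h => ?_⟩
          · show ((⟨i, t⁻¹⟩ :: W'.toList) ++ [⟨i, t⟩] : List (Σ i, G i)).getLast?.map Sigma.fst
                = _
            rw [List.getLast?_concat,
              show ((⟨i, s⟩ :: (M ++ [⟨i, t⟩])) : List (Σ i, G i))
                = (⟨i, s⟩ :: M) ++ [⟨i, t⟩] from rfl, List.getLast?_concat]
          · exfalso
            apply h
            rw [show ((⟨i, s⟩ :: (M ++ [⟨i, t⟩])) : List (Σ i, G i))
                = (⟨i, s⟩ :: M) ++ [⟨i, t⟩] from rfl, List.getLast?_concat]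
            rfl
      · -- merge case
        obtain ⟨k, rfl⟩ : ∃ k, n = k + 1 := ⟨n - 1, by omega⟩
        have hk : k ≠ 0 := by omega
        set B : List (Σ i, G i) := ⟨i, t * s⟩ :: M with hB
        have cB : B.IsChain (fun l l' => l.1 ≠ l'.1) := by
          refine List.isChain_cons.mpr ⟨?_, cM⟩
          intro y hy
          rw [hMh, Option.mem_some_iff] at hy
          rw [← hy]
          exact hih
        have hBgl : B.getLast? = some (M.getLast hM) := by
          rw [hB, show ((⟨i, t * s⟩ :: M) : List (Σ i, G i)) = [⟨i, t * s⟩] ++ M from rfl,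
            List.getLast?_append, List.getLast?_eq_getLast hM]
          rfl
        have cF : ((List.replicate k B).flatten).IsChain (fun l l' => l.1 ≠ l'.1) := by
          refine chain'_flatten_replicate cB ?_ k
          intro x hx y hy
          rw [hBgl, Option.mem_some_iff] at hx
          rw [hB] at hy
          simp only [List.head?_cons, Option.mem_some_iff] at hy
          rw [← hx, ← hy]
          exact hmb
        set Ln : List (Σ i, G i) :=
          ((⟨i, s⟩ :: M) ++ (List.replicate k B).flatten) ++ [⟨i, t⟩] with hLn
        have hne : ∀ l ∈ Ln, l.2 ≠ 1 := by
          intro l hl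
          rcases List.mem_append.mp hl with hl | hl
          · rcases List.mem_append.mp hl with hl | hl
            · rcases List.mem_cons.mp hl with rfl | hl
              · exact hs
              · exact h1 l (by simp [hl])
            · obtain ⟨rep, hrep, hlrep⟩ := List.mem_flatten.mp hl
              rw [List.eq_of_mem_replicate hrep] at hlrep
              rcases List.mem_cons.mp hlrep with rfl | hl2
              · exact hts
              · exact h1 l (by simp [hl2])
          · rw [List.mem_singleton.mp hl]; exact ht
        have hch : Ln.IsChain (fun l l' => l.1 ≠ l'.1) := by
          refine List.IsChain.append (List.IsChain.append cAM cF ?_) (List.isChain_singleton _) ?_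
          · intro x hx y hy
            rw [hgl, Option.mem_some_iff] at hx
            rw [head?_flatten_replicate k hk, hB] at hy
            simp only [List.head?_cons, Option.mem_some_iff] at hy
            rw [← hx, ← hy]
            exact hmb
          · intro x hx y hy
            rw [List.getLast?_append, getLast?_flatten_replicate k hk, hBgl,
              Option.some_or, Option.mem_some_iff] at hx
            simp only [List.head?_cons, Option.mem_some_iff] at hy
            rw [← hx, ← hy]
            exact hmb
        have hprod : wprod G Ln = (wprod G (⟨i, s⟩ :: (M ++ [⟨i, t⟩]))) ^ (k + 1) := by
          rw [hx, pow_abc, hLn, wprod_append, wprod_append, wprod_flatten_replicate, hB]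
          simp [wprod, map_mul, mul_assoc]
        right
        rw [← hprod, equiv_wprod G Ln hne hch]
        refine ⟨?_, ?_, fun h => ?_⟩
        · show Option.map Sigma.fst Ln.head? = _
          rw [hLn]
          simp
        · show Option.map Sigma.fst Ln.getLast? = _
          rw [hLn, List.getLast?_concat,
            show ((⟨i, s⟩ :: (M ++ [⟨i, t⟩])) : List (Σ i, G i))
              = (⟨i, s⟩ :: M) ++ [⟨i, t⟩] from rfl, List.getLast?_concat]
        · exfalso
          apply h
          rw [show ((⟨i, s⟩ :: (M ++ [⟨i, t⟩])) : List (Σ i, G i))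
              = (⟨i, s⟩ :: M) ++ [⟨i, t⟩] from rfl, List.getLast?_concat]
          rfl
    · -- cyclically reduced case
      have hbd : ∀ x ∈ (⟨i, s⟩ :: (M ++ [⟨j, t⟩]) : List (Σ i, G i)).getLast?,
          ∀ y ∈ (⟨i, s⟩ :: (M ++ [⟨j, t⟩]) : List (Σ i, G i)).head?, x.1 ≠ y.1 := by
        intro x hx y hy
        rw [show ((⟨i, s⟩ :: (M ++ [⟨j, t⟩])) : List (Σ i, G i))
            = (⟨i, s⟩ :: M) ++ [⟨j, t⟩] from rfl, List.getLast?_concat,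
            Option.mem_some_iff] at hx
        simp only [List.head?_cons, Option.mem_some_iff] at hy
        rw [← hx, ← hy]
        exact Ne.symm hij
      have hne : ∀ l ∈ (List.replicate n (⟨i, s⟩ :: (M ++ [⟨j, t⟩]))).flatten, l.2 ≠ 1 := by
        intro l hl
        obtain ⟨rep, hrep, hlrep⟩ := List.mem_flatten.mp hl
        rw [List.eq_of_mem_replicate hrep] at hlrep
        exact h1 l hlrep
      have hch := chain'_flatten_replicate h2 hbd n
      right
      rw [← wprod_flatten_replicate, equiv_wprod G _ hne hch]
      have hn0 : n ≠ 0 := by omega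
      refine ⟨?_, ?_, fun _ => ?_⟩
      · rw [head?_flatten_replicate n hn0]
      · rw [getLast?_flatten_replicate n hn0]
      · exact length_flatten_replicate n _

theorem pow_word_main (n : ℕ) (hn : 2 ≤ n) (L : List (Σ i, G i))
    (h1 : ∀ l ∈ L, l.2 ≠ 1) (h2 : L.IsChain fun l l' => l.1 ≠ l'.1) :
    (CoprodI.Word.equiv ((wprod G L) ^ n)).toList = [] ∨
      ((CoprodI.Word.equiv ((wprod G L) ^ n)).toList.head?.map Sigma.fst
          = L.head?.map Sigma.fst ∧
       (CoprodI.Word.equiv ((wprod G L) ^ n)).toList.getLast?.map Sigma.fst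
          = L.getLast?.map Sigma.fst ∧
       (L.head?.map Sigma.fst ≠ L.getLast?.map Sigma.fst →
         (CoprodI.Word.equiv ((wprod G L) ^ n)).toList.length = n * L.length)) :=
  pow_word_aux G n hn L.length L le_rfl h1 h2

theorem no_nth_root {i j : ι} (hij : i ≠ j) (u : G i) (v : G j) (hu : u ≠ 1) (hv : v ≠ 1)
    (n : ℕ) (hn : 2 ≤ n) (x : CoprodI G)
    (hx : x ^ n = CoprodI.of u * CoprodI.of v) : False := by
  have hL2 : (CoprodI.of u * CoprodI.of v : CoprodI G) = wprod G [⟨i, u⟩, ⟨j, v⟩] := by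
    simp [wprod]
  have hxw : x = wprod G (CoprodI.Word.equiv x).toList := by
    rw [wprod_word, prod_equiv]
  have h2 : ([⟨i, u⟩, ⟨j, v⟩] : List (Σ i, G i)).IsChain (fun l l' => l.1 ≠ l'.1) := by
    simp [hij]
  have h1 : ∀ l ∈ ([⟨i, u⟩, ⟨j, v⟩] : List (Σ i, G i)), l.2 ≠ 1 := by
    rintro l hl
    rcases List.mem_cons.mp hl with rfl | hl
    · exact hu
    · rw [List.mem_singleton.mp hl]; exact hv
  have hEq : CoprodI.Word.equiv (x ^ n) = ⟨[⟨i, u⟩, ⟨j, v⟩], h1, h2⟩ := by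
    rw [hx, hL2, equiv_wprod]
  have := pow_word_main G n hn (CoprodI.Word.equiv x).toList
    ((CoprodI.Word.equiv x).ne_one) ((CoprodI.Word.equiv x).chain_ne)
  rw [← hxw, hEq] at this
  rcases this with h | ⟨hh, hl, hlen⟩
  · simp at h
  · simp only [List.head?_cons, Option.map_some] at hh
    have hgl : ([⟨i, u⟩, ⟨j, v⟩] : List (Σ i, G i)).getLast? = some ⟨j, v⟩ := rfl
    rw [hgl] at hl
    simp only [Option.map_some] at hl
    set L := (CoprodI.Word.equiv x).toList with hLdef
    have hne : L.head?.map Sigma.fst ≠ L.getLast?.map Sigma.fst := by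
      rw [← hh, ← hl]
      simp [hij]
    have hlen2 : (2 : ℕ) = n * L.length := by
      have := hlen hne
      simpa using this
    have hL1 : L.length = 1 := by
      rcases Nat.lt_or_ge L.length 2 with h | h
      · interval_cases hL : L.length
        · omega
        · omega
      · have := Nat.mul_le_mul hn h
        omega
    obtain ⟨l0, hl0⟩ := List.length_eq_one_iff.mp hL1
    rw [hl0] at hh hl
    simp at hh hl
    rw [← hh] at hl
    exact hij (by simpa using hl.symm)

end FP


-- cyclic group generators
lemma zmod_gen_pow (m : ℕ) : (Multiplicative.ofAdd (1 : ZMod m)) ^ m = 1 := by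
  rw [← ofAdd_nsmul, ofAdd_eq_one, nsmul_eq_mul, mul_one, ZMod.natCast_self]

lemma zmod_gen_ne_one (m : ℕ) (hm : m ≠ 1) : (Multiplicative.ofAdd (1 : ZMod m)) ≠ 1 := by
  rw [Ne, ofAdd_eq_one]
  match m, hm with
  | 0, _ => exact one_ne_zero
  | (k+2), _ =>
    haveI : Fact (1 < k + 2) := ⟨by omega⟩
    exact one_ne_zero

def Fac (m k : ℕ) : Bool → Type := fun b => Multiplicative (ZMod (cond b k m))

instance facGroup (m k : ℕ) (b : Bool) : Group (Fac m k b) := by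
  cases b <;> (dsimp [Fac]; infer_instance)

instance facDecEq (m k : ℕ) (b : Bool) : DecidableEq (Fac m k b) := by
  cases b <;> (dsimp [Fac]; infer_instance)

def genA (m k : ℕ) : Fac m k false := Multiplicative.ofAdd (1 : ZMod m)
def genB (m k : ℕ) : Fac m k true := Multiplicative.ofAdd (1 : ZMod k)

lemma genA_pow (m k : ℕ) : (genA m k) ^ m = 1 := zmod_gen_pow m
lemma genB_pow (m k : ℕ) : (genB m k) ^ k = 1 := zmod_gen_pow k
lemma genA_ne_one (m k : ℕ) (hm : m ≠ 1) : genA m k ≠ 1 := zmod_gen_ne_one m hm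
lemma genB_ne_one (m k : ℕ) (hk : k ≠ 1) : genB m k ≠ 1 := zmod_gen_ne_one k hk

-- the projection killing the second factor
def fackill (m k : ℕ) : ∀ b, Fac m k b →* Fac m k false := fun b =>
  match b with
  | false => MonoidHom.id _
  | true => 1


def graphProdRels {V : Type} (Γ : SimpleGraph V) (𝔭 : V → ℕ) : Set (FreeGroup V) :=
  {w | (∃ v, 𝔭 v ≠ 0 ∧ w = FreeGroup.of v ^ 𝔭 v) ∨
       (∃ a b, Γ.Adj a b ∧
         w = FreeGroup.of a * FreeGroup.of b * (FreeGroup.of a)⁻¹ * (FreeGroup.of b)⁻¹)}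

def GraphProduct {V : Type} (Γ : SimpleGraph V) (𝔭 : V → ℕ) : Type :=
  PresentedGroup (graphProdRels Γ 𝔭)

instance {V : Type} (Γ : SimpleGraph V) (𝔭 : V → ℕ) : Group (GraphProduct Γ 𝔭) := by
  unfold GraphProduct; infer_instance

def GraphProduct.of {V : Type} {Γ : SimpleGraph V} {𝔭 : V → ℕ} (v : V) : GraphProduct Γ 𝔭 :=
  PresentedGroup.of v

/-- The support of an element of a graph product: the smallest set of vertices `A` such that
`g` lies in the subgroup generated by the generators from `A`. -/
def GraphProduct.sp {V : Type} {Γ : SimpleGraph V} {𝔭 : V → ℕ} (g : GraphProduct Γ 𝔭) : Set V :=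
  {v | ∀ A : Set V, g ∈ Subgroup.closure (GraphProduct.of '' A) → v ∈ A}

section Hom
variable {V : Type} (Γ : SimpleGraph V) (𝔭 : V → ℕ) (a₁ b₁ : V)

open Classical in
noncomputable def fmap : V → CoprodI (Fac (𝔭 a₁) (𝔭 b₁)) := fun v =>
  if v = a₁ then CoprodI.of (genA (𝔭 a₁) (𝔭 b₁))
  else if v = b₁ then CoprodI.of (genB (𝔭 a₁) (𝔭 b₁))
  else 1

lemma fmap_a₁ : fmap 𝔭 a₁ b₁ a₁ = CoprodI.of (genA (𝔭 a₁) (𝔭 b₁)) := by simp [fmap]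

lemma fmap_b₁ (hab : a₁ ≠ b₁) : fmap 𝔭 a₁ b₁ b₁ = CoprodI.of (genB (𝔭 a₁) (𝔭 b₁)) := by
  simp [fmap, Ne.symm hab]

lemma fmap_other {v : V} (h1 : v ≠ a₁) (h2 : v ≠ b₁) : fmap 𝔭 a₁ b₁ v = 1 := by
  simp [fmap, h1, h2]

lemma rels_hold (hab : a₁ ≠ b₁) (hadj : ¬ Γ.Adj a₁ b₁) :
    ∀ r ∈ graphProdRels Γ 𝔭, FreeGroup.lift (fmap 𝔭 a₁ b₁) r = 1 := by
  rintro r (⟨v, hv0, rfl⟩ | ⟨a, b, hab', rfl⟩)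
  · rw [map_pow, FreeGroup.lift_apply_of]
    by_cases h1 : v = a₁
    · rw [h1, fmap_a₁, ← map_pow, genA_pow, map_one]
    by_cases h2 : v = b₁
    · rw [h2, fmap_b₁ 𝔭 a₁ b₁ hab, ← map_pow, genB_pow, map_one]
    rw [fmap_other 𝔭 a₁ b₁ h1 h2, one_pow]
  · simp only [map_mul, map_inv, FreeGroup.lift_apply_of]
    have hcomm : Commute (fmap 𝔭 a₁ b₁ a) (fmap 𝔭 a₁ b₁ b) := by
      by_cases ha1 : a = a₁
      · by_cases hb1 : b = a₁
        · rw [ha1, hb1]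
        by_cases hb2 : b = b₁
        · exact absurd (hb2 ▸ ha1 ▸ hab') hadj
        · rw [fmap_other 𝔭 a₁ b₁ hb1 hb2]; exact Commute.one_right _
      by_cases ha2 : a = b₁
      · by_cases hb1 : b = a₁
        · exact absurd ((ha2 ▸ hb1 ▸ hab').symm) hadj
        by_cases hb2 : b = b₁
        · rw [ha2, hb2]
        · rw [fmap_other 𝔭 a₁ b₁ hb1 hb2]; exact Commute.one_right _
      · rw [fmap_other 𝔭 a₁ b₁ ha1 ha2]; exact Commute.one_left _
    rw [hcomm.eq]
    group

noncomputable def gpHom (hab : a₁ ≠ b₁) (hadj : ¬ Γ.Adj a₁ b₁) :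
    GraphProduct Γ 𝔭 →* CoprodI (Fac (𝔭 a₁) (𝔭 b₁)) :=
  PresentedGroup.toGroup (rels_hold Γ 𝔭 a₁ b₁ hab hadj)

lemma gpHom_of (hab : a₁ ≠ b₁) (hadj : ¬ Γ.Adj a₁ b₁) (v : V) :
    gpHom Γ 𝔭 a₁ b₁ hab hadj (GraphProduct.of v) = fmap 𝔭 a₁ b₁ v :=
  PresentedGroup.toGroup.of _

end Hom

theorem stmt_4 {V : Type} (Γ : SimpleGraph V) (𝔭 : V → ℕ)
    (h𝔭 : ∀ v, 𝔭 v = 0 ∨ IsPrimePow (𝔭 v))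
    (g : GraphProduct Γ 𝔭) (a₁ a₂ b₁ b₂ : V)
    (hdist : [a₁, a₂, b₁, b₂].Nodup)
    (hsp : a₁ ∉ GraphProduct.sp g ∧ a₂ ∉ GraphProduct.sp g ∧
           b₁ ∉ GraphProduct.sp g ∧ b₂ ∉ GraphProduct.sp g)
    (hadj₁ : ¬ Γ.Adj a₁ b₁) (hadj₂ : ¬ Γ.Adj a₂ b₂)
    (n : ℕ) (hn : 2 ≤ n) :
    ¬ ∃ x : GraphProduct Γ 𝔭,
        x ^ n = g * (GraphProduct.of a₁)⁻¹ * GraphProduct.of a₂ *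
          (GraphProduct.of b₁)⁻¹ * GraphProduct.of b₂ := by
  rintro ⟨x, hx⟩
  simp only [List.nodup_cons, List.mem_cons, List.mem_singleton, List.not_mem_nil,
    or_false, not_or, List.nodup_nil, and_true] at hdist
  obtain ⟨⟨h12, hab, h1b2⟩, ⟨h2b1, h2b2⟩, hb12, -⟩ := hdist
  have hm1 : 𝔭 a₁ ≠ 1 := by
    rcases h𝔭 a₁ with h | h
    · omega
    · exact h.ne_one
  have hk1 : 𝔭 b₁ ≠ 1 := by
    rcases h𝔭 b₁ with h | h
    · omega
    · exact h.ne_one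
  set φ := gpHom Γ 𝔭 a₁ b₁ hab hadj₁ with hφdef
  have hφa₂ : φ (GraphProduct.of a₂) = 1 := by
    rw [hφdef, gpHom_of]
    exact fmap_other 𝔭 a₁ b₁ (Ne.symm h12) h2b1
  have hφb₂ : φ (GraphProduct.of b₂) = 1 := by
    rw [hφdef, gpHom_of]
    exact fmap_other 𝔭 a₁ b₁ (Ne.symm h1b2) (Ne.symm hb12)
  obtain ⟨A₁, hgA₁, ha₁A₁⟩ : ∃ A : Set V,
      g ∈ Subgroup.closure (GraphProduct.of '' A) ∧ a₁ ∉ A := by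
    have h := hsp.1
    unfold GraphProduct.sp at h
    simp only [Set.mem_setOf_eq] at h
    push_neg at h
    exact h
  obtain ⟨A₂, hgA₂, hb₁A₂⟩ : ∃ A : Set V,
      g ∈ Subgroup.closure (GraphProduct.of '' A) ∧ b₁ ∉ A := by
    have h := hsp.2.2.1
    unfold GraphProduct.sp at h
    simp only [Set.mem_setOf_eq] at h
    push_neg at h
    exact h
  have h1 : φ g ∈ MonoidHom.range
      (CoprodI.of : Fac (𝔭 a₁) (𝔭 b₁) true →* CoprodI (Fac (𝔭 a₁) (𝔭 b₁))) := by
    have hmap : φ g ∈ Subgroup.map φ (Subgroup.closure (GraphProduct.of '' A₁)) :=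
      Subgroup.mem_map_of_mem φ hgA₁
    rw [MonoidHom.map_closure] at hmap
    refine (Subgroup.closure_le _).mpr ?_ hmap
    rintro _ ⟨_, ⟨v, hvA, rfl⟩, rfl⟩
    rw [hφdef, gpHom_of]
    by_cases hv : v = b₁
    · rw [hv, fmap_b₁ 𝔭 a₁ b₁ hab]
      exact ⟨genB _ _, rfl⟩
    · rw [fmap_other 𝔭 a₁ b₁ (fun h => ha₁A₁ (h ▸ hvA)) hv]
      exact ⟨1, map_one _⟩
  have h2 : φ g ∈ MonoidHom.range
      (CoprodI.of : Fac (𝔭 a₁) (𝔭 b₁) false →* CoprodI (Fac (𝔭 a₁) (𝔭 b₁))) := by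
    have hmap : φ g ∈ Subgroup.map φ (Subgroup.closure (GraphProduct.of '' A₂)) :=
      Subgroup.mem_map_of_mem φ hgA₂
    rw [MonoidHom.map_closure] at hmap
    refine (Subgroup.closure_le _).mpr ?_ hmap
    rintro _ ⟨_, ⟨v, hvA, rfl⟩, rfl⟩
    rw [hφdef, gpHom_of]
    by_cases hv : v = a₁
    · rw [hv, fmap_a₁]
      exact ⟨genA _ _, rfl⟩
    · rw [fmap_other 𝔭 a₁ b₁ hv (fun h => hb₁A₂ (h ▸ hvA))]
      exact ⟨1, map_one _⟩
  obtain ⟨uB, huB⟩ := h1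
  obtain ⟨uA, huA⟩ := h2
  have huA1 : uA = 1 := by
    have e1 : CoprodI.lift (fackill (𝔭 a₁) (𝔭 b₁)) (CoprodI.of uA) = uA := by
      rw [CoprodI.lift_of]; rfl
    have e2 : CoprodI.lift (fackill (𝔭 a₁) (𝔭 b₁)) (CoprodI.of uB) = 1 := by
      rw [CoprodI.lift_of]; rfl
    calc uA = CoprodI.lift (fackill (𝔭 a₁) (𝔭 b₁)) (CoprodI.of uA) := e1.symm
      _ = CoprodI.lift (fackill (𝔭 a₁) (𝔭 b₁)) (CoprodI.of uB) := by rw [huA, huB]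
      _ = 1 := e2
  have hφg : φ g = 1 := by rw [← huA, huA1, map_one]
  have hxn : (φ x) ^ n =
      CoprodI.of ((genA (𝔭 a₁) (𝔭 b₁))⁻¹) * CoprodI.of ((genB (𝔭 a₁) (𝔭 b₁))⁻¹) := by
    rw [← map_pow, hx]
    rw [map_mul, map_mul, map_mul, map_mul, map_inv, map_inv, hφg, hφa₂, hφb₂,
      hφdef, gpHom_of, gpHom_of, fmap_a₁, fmap_b₁ 𝔭 a₁ b₁ hab]
    rw [map_inv, map_inv]
    group
  exact no_nth_root (Fac (𝔭 a₁) (𝔭 b₁)) (Bool.false_ne_true)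
    ((genA (𝔭 a₁) (𝔭 b₁))⁻¹) ((genB (𝔭 a₁) (𝔭 b₁))⁻¹)
    (inv_ne_one.mpr (genA_ne_one _ _ hm1)) (inv_ne_one.mpr (genB_ne_one _ _ hk1))
    n hn (φ x) hxn
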